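/- Let K be a finite index set, C > 0, d : K → ℂ with Re d_k ≥ 0, Im d_k ≥ 0 and |d_k| ≤ C for every k ∈ K, and v : K → ℝ with v_k > 0 for every k. Define OPT₁ as the maximum of Σ_{k∈S₁} v_k over all S₁ ⊆ K with Re(Σ_{k∈S₁} d_k) + Im(Σ_{k∈S₁} d_k) ≤ C, and define V₂ as the maximum of v_k over all k ∈ K with Re d_k + Im d_k > C (with V₂ = 0 if no such k exists). Then for every S ⊆ K with |Σ_{k∈S} d_k| ≤ C, one has Σ_{k∈S} v_k ≤ OPT₁ + max(OPT₁, V₂). -/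

import Mathlib

/-- The combinatorial core of the case analysis in Theorem 2: for any feasible
C-KP solution `S`, its value is at most `OPT₁ + max OPT₁ V₂`, where `OPT₁` is
the optimal value over solutions whose demand sum lies in the triangle `D₁`,
and `V₂` is the best value of a single item whose demand lies in `D₂`
(zero if there is none). -/
theorem ckp_value_bound {K : Type*} [Fintype K] (C : ℝ) (hC : 0 < C)
    (d : K → ℂ) (hre : ∀ k, 0 ≤ (d k).re) (him : ∀ k, 0 ≤ (d k).im)
    (hmag : ∀ k, ‖d k‖ ≤ C)
    (v : K → ℝ) (hv : ∀ k, 0 < v k)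
    (OPT₁ V₂ : ℝ)
    (hOPT₁ : OPT₁ = sSup {x : ℝ | ∃ S₁ : Finset K,
      (∑ k ∈ S₁, d k).re + (∑ k ∈ S₁, d k).im ≤ C ∧ x = ∑ k ∈ S₁, v k})
    (hV₂ : V₂ = sSup (insert 0 {x : ℝ | ∃ k : K, C < (d k).re + (d k).im ∧ x = v k}))
    (S : Finset K) (hS : ‖∑ k ∈ S, d k‖ ≤ C) :
    ∑ k ∈ S, v k ≤ OPT₁ + max OPT₁ V₂ := by
  classical
  set w : K → ℝ := fun k => (d k).re + (d k).im with hw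
  have hwnn : ∀ k, 0 ≤ w k := fun k => add_nonneg (hre k) (him k)
  have hwsum : ∀ T : Finset K,
      (∑ k ∈ T, d k).re + (∑ k ∈ T, d k).im = ∑ k ∈ T, w k := by
    intro T
    simp [hw, Complex.re_sum, Complex.im_sum, Finset.sum_add_distrib]
  have hBdd1 : BddAbove {x : ℝ | ∃ S₁ : Finset K,
      (∑ k ∈ S₁, d k).re + (∑ k ∈ S₁, d k).im ≤ C ∧ x = ∑ k ∈ S₁, v k} := by
    refine ⟨∑ k, v k, ?_⟩
    rintro x ⟨S₁, -, rfl⟩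
    exact Finset.sum_le_univ_sum_of_nonneg (fun k => (hv k).le)
  have hOPTle : ∀ T : Finset K, ∑ k ∈ T, w k ≤ C → ∑ k ∈ T, v k ≤ OPT₁ := by
    intro T hT
    rw [hOPT₁]
    exact le_csSup hBdd1 ⟨T, by rw [hwsum]; exact hT, rfl⟩
  have hOPT0 : 0 ≤ OPT₁ := by
    have := hOPTle ∅ (by simp [hC.le])
    simpa using this
  have hV₂le : ∀ k, C < w k → v k ≤ V₂ := by
    intro k hk
    rw [hV₂]
    apply le_csSup
    · apply Set.Finite.bddAbove
      apply Set.Finite.insert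
      exact (Set.finite_range v).subset (by rintro x ⟨k, -, rfl⟩; exact ⟨k, rfl⟩)
    · exact Set.mem_insert_of_mem _ ⟨k, hk, rfl⟩
  set W := ∑ k ∈ S, w k with hWdef
  have hWle : W ≤ 3 / 2 * C := by
    have h2 := Complex.sq_norm (∑ k ∈ S, d k)
    rw [Complex.normSq_apply] at h2
    have h3 : (0:ℝ) ≤ ‖∑ k ∈ S, d k‖ := norm_nonneg _
    have h1 : (∑ k ∈ S, d k).re * (∑ k ∈ S, d k).re
        + (∑ k ∈ S, d k).im * (∑ k ∈ S, d k).im ≤ C ^ 2 := by nlinarith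
    have hre' : 0 ≤ (∑ k ∈ S, d k).re := by
      rw [Complex.re_sum]; exact Finset.sum_nonneg (fun k _ => hre k)
    have him' : 0 ≤ (∑ k ∈ S, d k).im := by
      rw [Complex.im_sum]; exact Finset.sum_nonneg (fun k _ => him k)
    have h4 := hwsum S
    rw [← hWdef] at h4
    nlinarith [sq_nonneg ((∑ k ∈ S, d k).re - (∑ k ∈ S, d k).im)]
  by_cases hbig : ∃ j ∈ S, C < w j
  · obtain ⟨j, hjS, hj⟩ := hbig
    have hsplit : ∑ k ∈ S \ {j}, v k + ∑ k ∈ {j}, v k = ∑ k ∈ S, v k :=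
      Finset.sum_sdiff (Finset.singleton_subset_iff.2 hjS)
    have hwsplit : ∑ k ∈ S \ {j}, w k + ∑ k ∈ {j}, w k = W :=
      Finset.sum_sdiff (Finset.singleton_subset_iff.2 hjS)
    simp only [Finset.sum_singleton] at hsplit hwsplit
    have h1 : ∑ k ∈ S \ {j}, v k ≤ OPT₁ := hOPTle _ (by linarith)
    have h2 : v j ≤ V₂ := hV₂le j hj
    have h3 : V₂ ≤ max OPT₁ V₂ := le_max_right _ _
    linarith
  · push_neg at hbig
    have key : ∃ T ⊆ S, ∑ k ∈ T, w k ≤ C ∧ ∑ k ∈ S \ T, w k ≤ C := by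
      by_cases hWC : W ≤ C
      · exact ⟨S, le_refl _, hWC, by simp [hC.le]⟩
      obtain ⟨T, hTmem, hTmax⟩ := Finset.exists_max_image
        (S.powerset.filter fun T => ∑ k ∈ T, w k ≤ C)
        (fun T => ∑ k ∈ T, w k)
        ⟨∅, by simp [hC.le]⟩
      simp only [Finset.mem_filter, Finset.mem_powerset] at hTmem
      obtain ⟨hTS, hTle⟩ := hTmem
      by_cases h2 : ∑ k ∈ S \ T, w k ≤ C
      · exact ⟨T, hTS, hTle, h2⟩
      push_neg at h2
      have hex : ∃ k ∈ S \ T, 0 < w k := by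
        by_contra h
        push_neg at h
        have : ∑ k ∈ S \ T, w k ≤ 0 := Finset.sum_nonpos h
        linarith
      obtain ⟨k, hkST, hk⟩ := hex
      have hkS : k ∈ S := (Finset.mem_sdiff.1 hkST).1
      have hkT : k ∉ T := (Finset.mem_sdiff.1 hkST).2
      have hins : C < ∑ k' ∈ insert k T, w k' := by
        by_contra h
        push_neg at h
        have := hTmax (insert k T) (Finset.mem_filter.2
          ⟨Finset.mem_powerset.2 (Finset.insert_subset hkS hTS), h⟩)
        rw [Finset.sum_insert hkT] at this
        linarith
      rw [Finset.sum_insert hkT] at hins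
      have hwsT : ∑ k' ∈ S \ T, w k' + ∑ k' ∈ T, w k' = W := Finset.sum_sdiff hTS
      refine ⟨{k}, Finset.singleton_subset_iff.2 hkS, by simpa using hbig k hkS, ?_⟩
      have h3 : ∑ k' ∈ S \ {k}, w k' + ∑ k' ∈ {k}, w k' = W :=
        Finset.sum_sdiff (Finset.singleton_subset_iff.2 hkS)
      simp only [Finset.sum_singleton] at h3
      linarith
    obtain ⟨T, hTS, h1, h2⟩ := key
    have hsplit : ∑ k ∈ S \ T, v k + ∑ k ∈ T, v k = ∑ k ∈ S, v k := Finset.sum_sdiff hTS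
    have hb1 := hOPTle T h1
    have hb2 := hOPTle _ h2
    have h3 : OPT₁ ≤ max OPT₁ V₂ := le_max_left _ _
    linarith
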